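/- Let R ≻ 0 and Q ⪰ 0, let (A,B) ∈ ℝ^{n×n} × ℝ^{n×m}, and let P₁, P₂ ⪰ 0. Then for every integer i ≥ 0: 𝓡^{(i)}_{A,B}(P₁) − 𝓡^{(i)}_{A,B}(P₂) = [Φ^{(0:i)}_{A,B}(P₁)]ᵀ (P₁ − P₂) Φ^{(0:i)}_{A,B}(P₂). -/

import Mathlib

open Matrix

/-- Spectral norm (operator 2-norm) of a real matrix. -/
noncomputable def spNorm {p q : ℕ} (M : Matrix (Fin p) (Fin q) ℝ) : ℝ :=
  ‖LinearMap.toContinuousLinearMap (Matrix.toEuclideanLin M)‖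

/-- The spectral radius of a real square matrix is `< 1`. -/
def StabMat {n : ℕ} (M : Matrix (Fin n) (Fin n) ℝ) : Prop :=
  ∀ μ ∈ spectrum ℂ (M.map (algebraMap ℝ ℂ)), ‖μ‖ < 1

/-- `(A, B)` is stabilizable. -/
def Stabilizable {n m : ℕ} (A : Matrix (Fin n) (Fin n) ℝ)
    (B : Matrix (Fin n) (Fin m) ℝ) : Prop :=
  ∃ K : Matrix (Fin m) (Fin n) ℝ, StabMat (A - B * K)

/-- Smallest (real) eigenvalue: `σ_min` for symmetric matrices. -/
noncomputable def minEig {k : ℕ} (M : Matrix (Fin k) (Fin k) ℝ) : ℝ :=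
  sInf (spectrum ℝ M)

/-- Largest (real) eigenvalue: `σ_max` for symmetric matrices. -/
noncomputable def maxEig {k : ℕ} (M : Matrix (Fin k) (Fin k) ℝ) : ℝ :=
  sSup (spectrum ℝ M)

/-- `S_B = B R⁻¹ Bᵀ`. -/
noncomputable def sMat {n m : ℕ} (R : Matrix (Fin m) (Fin m) ℝ)
    (B : Matrix (Fin n) (Fin m) ℝ) : Matrix (Fin n) (Fin n) ℝ :=
  B * R⁻¹ * Bᵀ

/-- Riccati map `𝓡_{A,B}(P) = Aᵀ P (I + S_B P)⁻¹ A + Q`. -/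
noncomputable def ric {n m : ℕ} (R : Matrix (Fin m) (Fin m) ℝ)
    (Q A : Matrix (Fin n) (Fin n) ℝ) (B : Matrix (Fin n) (Fin m) ℝ)
    (P : Matrix (Fin n) (Fin n) ℝ) : Matrix (Fin n) (Fin n) ℝ :=
  Aᵀ * P * (1 + sMat R B * P)⁻¹ * A + Q

/-- Riccati iterates: `𝓡^{(0)} = id`, `𝓡^{(i+1)} = 𝓡 ∘ 𝓡^{(i)}`. -/
noncomputable def ricIter {n m : ℕ} (R : Matrix (Fin m) (Fin m) ℝ)
    (Q A : Matrix (Fin n) (Fin n) ℝ) (B : Matrix (Fin n) (Fin m) ℝ) :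
    ℕ → Matrix (Fin n) (Fin n) ℝ → Matrix (Fin n) (Fin n) ℝ
  | 0, P => P
  | i + 1, P => ric R Q A B (ricIter R Q A B i P)

/-- Gain `𝓚_{A,B}(P) = (R + Bᵀ P B)⁻¹ Bᵀ P A`. -/
noncomputable def gain {n m : ℕ} (R : Matrix (Fin m) (Fin m) ℝ)
    (A : Matrix (Fin n) (Fin n) ℝ) (B : Matrix (Fin n) (Fin m) ℝ)
    (P : Matrix (Fin n) (Fin n) ℝ) : Matrix (Fin m) (Fin n) ℝ :=
  (R + Bᵀ * P * B)⁻¹ * (Bᵀ * P * A)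

/-- Closed loop matrix `𝓛_{A,B}(P) = (I + S_B P)⁻¹ A`. -/
noncomputable def clMat {n m : ℕ} (R : Matrix (Fin m) (Fin m) ℝ)
    (A : Matrix (Fin n) (Fin n) ℝ) (B : Matrix (Fin n) (Fin m) ℝ)
    (P : Matrix (Fin n) (Fin n) ℝ) : Matrix (Fin n) (Fin n) ℝ :=
  (1 + sMat R B * P)⁻¹ * A

/-- State transition matrix `Φ^{(j:i)}_{A,B}(P)`. -/
noncomputable def phiMat {n m : ℕ} (R : Matrix (Fin m) (Fin m) ℝ)
    (Q A : Matrix (Fin n) (Fin n) ℝ) (B : Matrix (Fin n) (Fin m) ℝ)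
    (P : Matrix (Fin n) (Fin n) ℝ) (j i : ℕ) : Matrix (Fin n) (Fin n) ℝ :=
  ((List.range (i - j)).map (fun k => clMat R A B (ricIter R Q A B (j + k) P))).prod

/-- Perturbed closed loop matrix `𝓛̄(P) = W(P)(H(P) + 𝓛_{A★,B★}(P))`. -/
noncomputable def lbarMat {n m : ℕ} (R : Matrix (Fin m) (Fin m) ℝ)
    (As : Matrix (Fin n) (Fin n) ℝ) (Bs : Matrix (Fin n) (Fin m) ℝ)
    (Ah : Matrix (Fin n) (Fin n) ℝ) (Bh : Matrix (Fin n) (Fin m) ℝ)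
    (P : Matrix (Fin n) (Fin n) ℝ) : Matrix (Fin n) (Fin n) ℝ :=
  (1 + (sMat R Bs - sMat R Bh) * P) *
    ((1 + sMat R Bs * P)⁻¹ * (Ah - As) + clMat R As Bs P)

/-- Perturbed state transition matrix `Φ̄^{(j:i)}(P)`. -/
noncomputable def phibarMat {n m : ℕ} (R : Matrix (Fin m) (Fin m) ℝ)
    (Q As : Matrix (Fin n) (Fin n) ℝ) (Bs : Matrix (Fin n) (Fin m) ℝ)
    (Ah : Matrix (Fin n) (Fin n) ℝ) (Bh : Matrix (Fin n) (Fin m) ℝ)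
    (P : Matrix (Fin n) (Fin n) ℝ) (j i : ℕ) : Matrix (Fin n) (Fin n) ℝ :=
  ((List.range (i - j)).map
    (fun k => lbarMat R As Bs Ah Bh (ricIter R Q As Bs (j + k) P))).prod

/-- The map `𝓜(P₁,P₂)`. -/
noncomputable def mMat {n m : ℕ} (R : Matrix (Fin m) (Fin m) ℝ)
    (As : Matrix (Fin n) (Fin n) ℝ) (Bs : Matrix (Fin n) (Fin m) ℝ)
    (Ah : Matrix (Fin n) (Fin n) ℝ) (Bh : Matrix (Fin n) (Fin m) ℝ)
    (P1 P2 : Matrix (Fin n) (Fin n) ℝ) : Matrix (Fin n) (Fin n) ℝ :=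
  Ahᵀ * P2 * (1 + sMat R Bs * P2)⁻¹ * Ah - Asᵀ * P2 * (1 + sMat R Bs * P2)⁻¹ * As
    + Ahᵀ * (1 + P1 * sMat R Bh)⁻¹ * P2 * (sMat R Bs - sMat R Bh) * P2 *
        (1 + sMat R Bs * P2)⁻¹ * Ah

/-- `β★ = σ_max(P★)/σ_min(Q)`. -/
noncomputable def betaStar {n : ℕ} (Q Pstar : Matrix (Fin n) (Fin n) ℝ) : ℝ :=
  maxEig Pstar / minEig Q

/-- `ψ(ε_m, ε_p)`. -/
noncomputable def psiF (U b em ep : ℝ) : ℝ :=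
  em * (1 + (em + 2 * U) ^ 2 * (b * ep + U))

/-- `γ₁(ε_m, ε_p)`. -/
noncomputable def gamma1F (U b em ep : ℝ) : ℝ :=
  Real.sqrt b * psiF U b em ep + Real.sqrt (1 - b⁻¹)

/-- `α_{ε_m} = (1 − 8‖P★‖² ε_m)^{−1/2}`, with `p = ‖P★‖`. -/
noncomputable def alphaF (p em : ℝ) : ℝ :=
  (1 - 8 * p ^ 2 * em) ^ (-(1 / 2) : ℝ)

/-- `γ₂(ε_m)`. -/
noncomputable def gamma2F (p b em : ℝ) : ℝ :=
  Real.sqrt (1 - (alphaF p em)⁻¹ * b⁻¹)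

/-- `ψ̃(ε_m)`. -/
noncomputable def psitF (U em : ℝ) : ℝ :=
  (em ^ 2 + 2 * U * em) * (U + (em + U) ^ 2 * U ^ 2)

/-- `Ê(ε_m, ε_p, i)`. -/
noncomputable def ehatF (p U b em ep : ℝ) (i : ℕ) : ℝ :=
  Real.sqrt (alphaF p em) * b *
    ((gamma1F U b em ep * gamma2F p b em) ^ i * ep +
      psitF U em * ((1 - (gamma1F U b em ep * gamma2F p b em) ^ i) /
        (1 - gamma1F U b em ep * gamma2F p b em)))

/-- `g(N, ε_m, ε_p)` with `r = σ_max(R)`, `p = ‖P★‖`, `b = β★`. -/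
noncomputable def gF (m : ℕ) (σw r U p b em ep : ℝ) (N : ℕ) : ℝ :=
  128 * (m : ℝ) * σw ^ 2 * (r + U ^ 3) * U ^ 4 * p ^ 2 *
    (em + ehatF p U b em ep (N - 1)) ^ 2

/-- The Lyapunov equation `Σ = (A−BK) Σ (A−BK)ᵀ + σ_w² I`. -/
def LyapEq {n m : ℕ} (As : Matrix (Fin n) (Fin n) ℝ) (Bs : Matrix (Fin n) (Fin m) ℝ)
    (K : Matrix (Fin m) (Fin n) ℝ) (σw : ℝ) (S : Matrix (Fin n) (Fin n) ℝ) : Prop :=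
  S = (As - Bs * K) * S * (As - Bs * K)ᵀ + σw ^ 2 • (1 : Matrix (Fin n) (Fin n) ℝ)

/-- `J_K = tr((Q + Kᵀ R K) Σ)`. -/
noncomputable def lqCost {n m : ℕ} (R : Matrix (Fin m) (Fin m) ℝ)
    (Q : Matrix (Fin n) (Fin n) ℝ) (K : Matrix (Fin m) (Fin n) ℝ)
    (S : Matrix (Fin n) (Fin n) ℝ) : ℝ :=
  ((Q + Kᵀ * R * K) * S).trace

section Aux
variable {n m : ℕ}

lemma trX {X : Matrix (Fin n) (Fin n) ℝ} (hX : X.PosSemidef) : Xᵀ = X := by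
  rw [← conjTranspose_eq_transpose_of_trivial]; exact hX.isHermitian.eq

lemma sMat_psd (R : Matrix (Fin m) (Fin m) ℝ) (B : Matrix (Fin n) (Fin m) ℝ)
    (hR : R.PosDef) : (sMat R B).PosSemidef := by
  have := hR.inv.posSemidef.mul_mul_conjTranspose_same B
  simpa [sMat, conjTranspose_eq_transpose_of_trivial] using this

lemma isUnit_det_aux {S P : Matrix (Fin n) (Fin n) ℝ} (hS : S.PosSemidef)
    (hP : P.PosSemidef) : IsUnit (1 + S * P).det := by
  obtain ⟨q, hq, hqq⟩ : ∃ q : Matrix (Fin n) (Fin n) ℝ, q.PosSemidef ∧ q * q = P :=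
    open scoped MatrixOrder in
    ⟨CFC.sqrt P, (CFC.sqrt_nonneg P).posSemidef, CFC.sqrt_mul_sqrt_self P hP.nonneg⟩
  have hdet : (1 + S * P).det = (1 + q * (S * q)).det := by
    rw [← hqq, ← Matrix.mul_assoc, Matrix.det_one_add_mul_comm]
  have hpsd : (q * S * q).PosSemidef := by
    have := hS.mul_mul_conjTranspose_same q
    rwa [conjTranspose_eq_transpose_of_trivial, trX hq] at this
  have hpd : (1 + q * (S * q)).PosDef := by
    rw [← Matrix.mul_assoc]
    exact Matrix.PosDef.add_posSemidef Matrix.PosDef.one hpsd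
  rw [hdet]
  exact isUnit_iff_ne_zero.mpr hpd.det_pos.ne'

lemma push_aux {U V : Matrix (Fin n) (Fin n) ℝ} (h : IsUnit (1 + V * U).det) :
    U * (1 + V * U)⁻¹ = (1 + U * V)⁻¹ * U := by
  have h2 : IsUnit (1 + U * V).det := by
    rwa [Matrix.det_one_add_mul_comm]
  have key : (1 + U * V) * U = U * (1 + V * U) := by
    rw [add_mul, mul_add, one_mul, mul_one, Matrix.mul_assoc]
  calc U * (1 + V * U)⁻¹
      = ((1 + U * V)⁻¹ * (1 + U * V)) * (U * (1 + V * U)⁻¹) := by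
        rw [Matrix.nonsing_inv_mul _ h2, one_mul]
    _ = (1 + U * V)⁻¹ * ((U * (1 + V * U)) * (1 + V * U)⁻¹) := by
        rw [Matrix.mul_assoc, ← Matrix.mul_assoc (1 + U * V), key]
    _ = (1 + U * V)⁻¹ * U := by
        rw [Matrix.mul_assoc U, Matrix.mul_nonsing_inv _ h, mul_one]

lemma ric_psd (R : Matrix (Fin m) (Fin m) ℝ) (Q A : Matrix (Fin n) (Fin n) ℝ)
    (B : Matrix (Fin n) (Fin m) ℝ) (hR : R.PosDef) (hQ : Q.PosSemidef)
    {P : Matrix (Fin n) (Fin n) ℝ} (hP : P.PosSemidef) :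
    (ric R Q A B P).PosSemidef := by
  set S := sMat R B with hSdef
  have hS := sMat_psd R B hR
  obtain ⟨s, hs, hss⟩ : ∃ s : Matrix (Fin n) (Fin n) ℝ, s.PosSemidef ∧ s * s = P :=
    open scoped MatrixOrder in
    ⟨CFC.sqrt P, (CFC.sqrt_nonneg P).posSemidef, CFC.sqrt_mul_sqrt_self P hP.nonneg⟩
  have hSsPsd : (s * S * s).PosSemidef := by
    have := hS.mul_mul_conjTranspose_same s
    rwa [conjTranspose_eq_transpose_of_trivial, trX hs] at this
  have hpd : (1 + s * S * s).PosDef := Matrix.PosDef.add_posSemidef Matrix.PosDef.one hSsPsd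
  have hu1 : IsUnit (1 + (S * s) * s).det := by
    rw [Matrix.mul_assoc, hss]; exact isUnit_det_aux hS hP
  have key : P * (1 + S * P)⁻¹ = s * (1 + s * S * s)⁻¹ * s := by
    have hp := push_aux (U := s) (V := S * s) hu1
    rw [Matrix.mul_assoc, hss] at hp
    calc P * (1 + S * P)⁻¹ = s * (s * (1 + S * P)⁻¹) := by rw [← Matrix.mul_assoc, hss]
      _ = s * ((1 + s * (S * s))⁻¹ * s) := by rw [hp]
      _ = s * (1 + s * S * s)⁻¹ * s := by rw [Matrix.mul_assoc s, Matrix.mul_assoc s S s]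
  have hmid : (s * (1 + s * S * s)⁻¹ * s).PosSemidef := by
    have := hpd.inv.posSemidef.mul_mul_conjTranspose_same s
    rwa [conjTranspose_eq_transpose_of_trivial, trX hs] at this
  have hfinal : (Aᵀ * P * (1 + S * P)⁻¹ * A).PosSemidef := by
    have h2 := hmid.conjTranspose_mul_mul_same A
    rw [conjTranspose_eq_transpose_of_trivial] at h2
    rw [Matrix.mul_assoc Aᵀ, key]
    exact h2
  exact hfinal.add hQ

lemma ric_diff (R : Matrix (Fin m) (Fin m) ℝ) (Q A : Matrix (Fin n) (Fin n) ℝ)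
    (B : Matrix (Fin n) (Fin m) ℝ) (hR : R.PosDef)
    {X Y : Matrix (Fin n) (Fin n) ℝ} (hX : X.PosSemidef) (hY : Y.PosSemidef) :
    ric R Q A B X - ric R Q A B Y = (clMat R A B X)ᵀ * (X - Y) * clMat R A B Y := by
  set S := sMat R B with hSdef
  have hS := sMat_psd R B hR
  have huX : IsUnit (1 + S * X).det := isUnit_det_aux hS hX
  have huY : IsUnit (1 + S * Y).det := isUnit_det_aux hS hY
  have huX' : IsUnit (1 + X * S).det := by
    rw [Matrix.det_one_add_mul_comm]; exact huX
  have htr : (clMat R A B X)ᵀ = Aᵀ * (1 + X * S)⁻¹ := by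
    rw [clMat, Matrix.transpose_mul, Matrix.transpose_nonsing_inv, Matrix.transpose_add,
      Matrix.transpose_one, Matrix.transpose_mul, trX hX, trX hS]
  have hpush : X * (1 + S * X)⁻¹ = (1 + X * S)⁻¹ * X := push_aux huX
  have hmid : X * (1 + S * X)⁻¹ - Y * (1 + S * Y)⁻¹
      = (1 + X * S)⁻¹ * (X - Y) * (1 + S * Y)⁻¹ := by
    have hfac : (1 + X * S)⁻¹ * (X - Y) * (1 + S * Y)⁻¹
        = (1 + X * S)⁻¹ * ((X * (1 + S * Y) - (1 + X * S) * Y) * (1 + S * Y)⁻¹) := by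
      rw [Matrix.mul_assoc]
      congr 2
      rw [mul_add, add_mul, mul_one, one_mul, Matrix.mul_assoc]
      abel
    rw [hfac, sub_mul, Matrix.mul_assoc X, Matrix.mul_nonsing_inv _ huY, mul_one,
      mul_sub, ← Matrix.mul_assoc, ← Matrix.mul_assoc, Matrix.nonsing_inv_mul _ huX',
      one_mul, hpush]
  rw [ric, ric, htr, clMat, add_sub_add_right_eq_sub]
  calc Aᵀ * X * (1 + S * X)⁻¹ * A - Aᵀ * Y * (1 + S * Y)⁻¹ * A
      = Aᵀ * ((X * (1 + S * X)⁻¹ - Y * (1 + S * Y)⁻¹) * A) := by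
        simp only [Matrix.sub_mul, Matrix.mul_sub, Matrix.mul_assoc]
    _ = Aᵀ * (1 + X * S)⁻¹ * (X - Y) * ((1 + S * Y)⁻¹ * A) := by
        rw [hmid, Matrix.mul_assoc, Matrix.mul_assoc, Matrix.mul_assoc, Matrix.mul_assoc]

lemma ricIter_psd (R : Matrix (Fin m) (Fin m) ℝ) (Q A : Matrix (Fin n) (Fin n) ℝ)
    (B : Matrix (Fin n) (Fin m) ℝ) (hR : R.PosDef) (hQ : Q.PosSemidef)
    {P : Matrix (Fin n) (Fin n) ℝ} (hP : P.PosSemidef) (i : ℕ) :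
    (ricIter R Q A B i P).PosSemidef := by
  induction i with
  | zero => exact hP
  | succ k ih => exact ric_psd R Q A B hR hQ ih

lemma phiMat_zero (R : Matrix (Fin m) (Fin m) ℝ) (Q A : Matrix (Fin n) (Fin n) ℝ)
    (B : Matrix (Fin n) (Fin m) ℝ) (P : Matrix (Fin n) (Fin n) ℝ) :
    phiMat R Q A B P 0 0 = 1 := by
  simp [phiMat]

lemma phiMat_succ (R : Matrix (Fin m) (Fin m) ℝ) (Q A : Matrix (Fin n) (Fin n) ℝ)
    (B : Matrix (Fin n) (Fin m) ℝ) (P : Matrix (Fin n) (Fin n) ℝ) (i : ℕ) :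
    phiMat R Q A B P 0 (i + 1)
      = phiMat R Q A B P 0 i * clMat R A B (ricIter R Q A B i P) := by
  simp [phiMat, List.range_succ]

end Aux

theorem stmt8 {n m : ℕ} (hn : 0 < n) (hm : 0 < m)
    (A : Matrix (Fin n) (Fin n) ℝ) (B : Matrix (Fin n) (Fin m) ℝ)
    (R : Matrix (Fin m) (Fin m) ℝ) (Q P1 P2 : Matrix (Fin n) (Fin n) ℝ)
    (hR : R.PosDef) (hQ : Q.PosSemidef)
    (hP1 : P1.PosSemidef) (hP2 : P2.PosSemidef) :
    ∀ i : ℕ,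
      ricIter R Q A B i P1 - ricIter R Q A B i P2 =
        (phiMat R Q A B P1 0 i)ᵀ * (P1 - P2) * phiMat R Q A B P2 0 i := by
  intro i
  induction i with
  | zero =>
    simp [ricIter, phiMat_zero]
  | succ k ih =>
    have hX1 := ricIter_psd R Q A B hR hQ hP1 k
    have hX2 := ricIter_psd R Q A B hR hQ hP2 k
    have h := ric_diff R Q A B hR hX1 hX2
    rw [show ricIter R Q A B (k+1) P1 = ric R Q A B (ricIter R Q A B k P1) from rfl,
        show ricIter R Q A B (k+1) P2 = ric R Q A B (ricIter R Q A B k P2) from rfl,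
        h, ih, phiMat_succ, phiMat_succ, Matrix.transpose_mul]
    rw [Matrix.mul_assoc, Matrix.mul_assoc, Matrix.mul_assoc, Matrix.mul_assoc,
        Matrix.mul_assoc]
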